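/- Let N ≥ 2, let d_1, ..., d_{N−1} be nonnegative integers, and let A be an N × (N−1) matrix over ℂ[x, y] whose entry A_{ij} is homogeneous of degree d_j. Suppose that for every (x_0, y_0) ∈ ℂ² ∖ {0} the complex matrix A(x_0, y_0) has rank N−1. For 1 ≤ i ≤ N set m_i = (−1)^i · det(A with its i-th row deleted). Then: (a) Σ_{i=1}^{N} m_i A_{ij} = 0 for every column index j; (b) the polynomials m_1, ..., m_N have no common zero in ℂ² ∖ {0}; and (c) every vector v ∈ ℂ[x, y]^N satisfying Σ_{i=1}^{N} v_i m_i = 0 lies in the column span of A over ℂ[x, y], i.e., v = A·u for some u ∈ ℂ[x, y]^{N−1}. -/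

import Mathlib

open MvPolynomial

noncomputable local instance : StrongNormalizationMonoid (MvPolynomial (Fin 2) ℂ) :=
  UniqueFactorizationMonoid.normalizationMonoid

noncomputable local instance : StrongNormalizedGCDMonoid (MvPolynomial (Fin 2) ℂ) :=
  UniqueFactorizationMonoid.toStrongNormalizedGCDMonoid _

private lemma aux_prime_X (s : Fin 2) : Prime (X s : MvPolynomial (Fin 2) ℂ) := by
  have h0 : Prime (X 0 : MvPolynomial (Fin 2) ℂ) := by
    rw [← MulEquiv.prime_iff (MvPolynomial.finSuccEquiv ℂ 1).toMulEquiv]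
    have : (MvPolynomial.finSuccEquiv ℂ 1).toMulEquiv (X 0) = Polynomial.X := by
      simpa using MvPolynomial.finSuccEquiv_X_zero (R := ℂ) (n := 1)
    rw [this]
    exact Polynomial.prime_X
  have h1 := (MulEquiv.prime_iff (MvPolynomial.renameEquiv ℂ (Equiv.swap (0 : Fin 2) s)).toMulEquiv
    (p := (X 0 : MvPolynomial (Fin 2) ℂ))).symm
  rw [h1] at h0
  simpa [Equiv.swap_apply_left] using h0

private lemma aux_not_X0_dvd_X1 : ¬ (X 0 : MvPolynomial (Fin 2) ℂ) ∣ X 1 := by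
  rintro ⟨c, hc⟩
  have := congrArg (eval (![0, 1] : Fin 2 → ℂ)) hc
  simp at this

private lemma aux_gcd_unit (a b : ℕ) :
    IsUnit (gcd ((X 0 : MvPolynomial (Fin 2) ℂ) ^ a) ((X 1 : MvPolynomial (Fin 2) ℂ) ^ b)) := by
  by_contra h
  have hg0 : gcd ((X 0 : MvPolynomial (Fin 2) ℂ) ^ a) ((X 1 : MvPolynomial (Fin 2) ℂ) ^ b) ≠ 0 := by
    intro h0
    have := gcd_dvd_left ((X 0 : MvPolynomial (Fin 2) ℂ) ^ a) ((X 1 : MvPolynomial (Fin 2) ℂ) ^ b)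
    rw [h0] at this
    exact pow_ne_zero a (X_ne_zero 0) (zero_dvd_iff.mp this)
  obtain ⟨p, hp, hpd⟩ := WfDvdMonoid.exists_irreducible_factor h hg0
  have hpp : Prime p := UniqueFactorizationMonoid.irreducible_iff_prime.mp hp
  have hpx : p ∣ (X 0 : MvPolynomial (Fin 2) ℂ) :=
    hpp.dvd_of_dvd_pow (hpd.trans (gcd_dvd_left _ _))
  have hpy : p ∣ (X 1 : MvPolynomial (Fin 2) ℂ) :=
    hpp.dvd_of_dvd_pow (hpd.trans (gcd_dvd_right _ _))
  have h1 : Associated p (X 0 : MvPolynomial (Fin 2) ℂ) :=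
    hp.associated_of_dvd (aux_prime_X 0).irreducible hpx
  exact aux_not_X0_dvd_X1 (h1.symm.dvd.trans hpy)

private lemma aux_key_dvd (g t : MvPolynomial (Fin 2) ℂ) (a b : ℕ)
    (h1 : g ∣ (X 0 : MvPolynomial (Fin 2) ℂ) ^ a * t)
    (h2 : g ∣ (X 1 : MvPolynomial (Fin 2) ℂ) ^ b * t) : g ∣ t := by
  have hg : g ∣ gcd ((X 0 : MvPolynomial (Fin 2) ℂ) ^ a * t)
      ((X 1 : MvPolynomial (Fin 2) ℂ) ^ b * t) := dvd_gcd h1 h2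
  rw [gcd_mul_right] at hg
  rw [(aux_gcd_unit a b).dvd_mul_left] at hg
  exact hg.trans (normalize_dvd_iff.mpr dvd_rfl)

/-- Let `A` be an `(n+1) × n` matrix of binary forms over `ℂ` (entries of column `j`
homogeneous of degree `d j`) which has full rank `n` at every point of `ℂ² \ {0}`, and
let `m i = (-1)^i` times the determinant of `A` with row `i` deleted. Then the `m i`
give a relation among the rows of `A`, have no common zero in `ℂ² \ {0}`, and every
polynomial relation among the `m i` comes from the columns of `A`. -/
theorem stmt_11 (n : ℕ) (hn : 1 ≤ n) (d : Fin n → ℕ)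
    (A : Matrix (Fin (n + 1)) (Fin n) (MvPolynomial (Fin 2) ℂ))
    (hA : ∀ i j, (A i j).IsHomogeneous (d j))
    (hrank : ∀ p : Fin 2 → ℂ, p ≠ 0 → (A.map (eval p)).rank = n)
    (m : Fin (n + 1) → MvPolynomial (Fin 2) ℂ)
    (hm : ∀ i, m i = (-1) ^ (i : ℕ) * (A.submatrix i.succAbove id).det) :
    (∀ j, ∑ i, m i * A i j = 0) ∧
    (∀ p : Fin 2 → ℂ, p ≠ 0 → ∃ i, eval p (m i) ≠ 0) ∧
    (∀ v : Fin (n + 1) → MvPolynomial (Fin 2) ℂ, (∑ i, v i * m i) = 0 →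
      ∃ u : Fin n → MvPolynomial (Fin 2) ℂ, ∀ i, v i = ∑ j, A i j * u j) := by
  classical
  -- the matrix obtained by prepending a column `w` to `A`
  let Bw : (Fin (n + 1) → (MvPolynomial (Fin 2) ℂ)) → Matrix (Fin (n + 1)) (Fin (n + 1)) (MvPolynomial (Fin 2) ℂ) :=
    fun w => Matrix.of fun i k => (Fin.cons (w i) (A i) : Fin (n + 1) → (MvPolynomial (Fin 2) ℂ)) k
  have hBw0 : ∀ w i, Bw w i 0 = w i := fun w i => rfl
  have hBws : ∀ w i (j : Fin n), Bw w i j.succ = A i j := fun w i j => by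
    simp [Bw, Fin.cons_succ]
  have hBwsub : ∀ w (i : Fin (n + 1)),
      (Bw w).submatrix i.succAbove Fin.succ = A.submatrix i.succAbove id := by
    intro w i
    ext r c
    simp [Bw, Matrix.submatrix_apply, Fin.cons_succ]
  -- Laplace expansion along the first column
  have hexp : ∀ w : Fin (n + 1) → (MvPolynomial (Fin 2) ℂ), (Bw w).det = ∑ i, w i * m i := by
    intro w
    rw [Matrix.det_succ_column_zero]
    refine Finset.sum_congr rfl fun i _ => ?_
    rw [hBwsub w i, hBw0, hm i]
    ring
  -- part (a)
  have hpartA : ∀ j, ∑ i, m i * A i j = 0 := by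
    intro j
    have hdet : (Bw fun i => A i j).det = 0 := by
      refine Matrix.det_zero_of_column_eq (M := Bw fun i => A i j)
        (i := 0) (j := j.succ) (Fin.succ_ne_zero j).symm fun k => ?_
      rw [hBw0, hBws]
    rw [hexp] at hdet
    rw [← hdet]
    exact Finset.sum_congr rfl fun i _ => mul_comm _ _
  -- part (b)
  have hpartB : ∀ p : Fin 2 → ℂ, p ≠ 0 → ∃ i, eval p (m i) ≠ 0 := by
    intro p hp
    by_contra hall
    push_neg at hall
    set Ap : Matrix (Fin (n + 1)) (Fin n) ℂ := A.map (eval p) with hApdef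
    have hrk : Ap.rank = n := hrank p hp
    have hdet0 : ∀ i : Fin (n + 1), (Ap.submatrix i.succAbove id).det = 0 := by
      intro i
      have h1 : eval p (m i) = 0 := hall i
      rw [hm i] at h1
      rw [map_mul, map_pow, map_neg, map_one] at h1
      have h2 : eval p (A.submatrix i.succAbove id).det = 0 := by
        rcases mul_eq_zero.mp h1 with h | h
        · exact absurd h (by simp [pow_ne_zero])
        · exact h
      rw [RingHom.map_det, RingHom.mapMatrix_apply] at h2
      rw [hApdef, Matrix.submatrix_map]
      exact h2
    -- the linear map given by Ap is injective
    have hker : LinearMap.ker Ap.mulVecLin = ⊥ := by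
      have h1 := LinearMap.finrank_range_add_finrank_ker Ap.mulVecLin
      rw [Module.finrank_fintype_fun_eq_card, Fintype.card_fin] at h1
      have h2 : Module.finrank ℂ (LinearMap.range Ap.mulVecLin) = n := hrk
      rw [h2] at h1
      have h3 : Module.finrank ℂ (LinearMap.ker Ap.mulVecLin) = 0 := by omega
      exact Submodule.finrank_eq_zero.mp h3
    -- every standard basis vector lies in the range
    have hsingle : ∀ i : Fin (n + 1),
        Pi.single i (1 : ℂ) ∈ LinearMap.range Ap.mulVecLin := by
      intro i
      obtain ⟨c, hc0, hc⟩ := Matrix.exists_mulVec_eq_zero_iff.mpr (hdet0 i)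
      have hcoord : ∀ l, l ≠ i → Ap.mulVec c l = 0 := by
        intro l hl
        obtain ⟨k, hk⟩ := Fin.exists_succAbove_eq (Ne.symm hl).symm
        have h4 : (Ap.submatrix i.succAbove id).mulVec c k = 0 := by rw [hc]; rfl
        rw [← hk]
        simpa [Matrix.mulVec, dotProduct, Matrix.submatrix_apply] using h4
      set s : ℂ := Ap.mulVec c i with hs
      have hfun : Ap.mulVec c = Pi.single i s := by
        funext l
        by_cases h : l = i
        · subst h; simp [hs]
        · rw [Pi.single_eq_of_ne h]; exact hcoord l h
      have hsne : s ≠ 0 := by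
        intro h0
        have : Ap.mulVec c = 0 := by rw [hfun, h0, Pi.single_zero]
        have hc0' : c ∈ LinearMap.ker Ap.mulVecLin := by
          rw [LinearMap.mem_ker, Matrix.mulVecLin_apply]; exact this
        rw [hker, Submodule.mem_bot] at hc0'
        exact hc0 hc0'
      refine ⟨s⁻¹ • c, ?_⟩
      rw [Matrix.mulVecLin_apply, Matrix.mulVec_smul, hfun]
      funext l
      by_cases h : l = i
      · subst h; simp [Pi.single_eq_same, inv_mul_cancel₀ hsne]
      · simp [Pi.single_eq_of_ne h]
    -- hence the range is everything, contradicting rank = n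
    have hrange : LinearMap.range Ap.mulVecLin = ⊤ := by
      rw [← top_le_iff]
      intro w _
      have hw : w = ∑ l, w l • (Pi.single l 1 : Fin (n + 1) → ℂ) := by
        funext r
        rw [Finset.sum_apply]
        simp [Pi.single_apply]
      rw [hw]
      exact Submodule.sum_mem _ fun l _ => Submodule.smul_mem _ _ (hsingle l)
    have hfinal : Ap.rank = n + 1 := by
      rw [Matrix.rank, hrange, finrank_top, Module.finrank_fintype_fun_eq_card, Fintype.card_fin]
    omega
  refine ⟨hpartA, hpartB, ?_⟩
  -- part (c)
  intro v hv
  -- some m k is nonzero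
  have h10 : (![1, 0] : Fin 2 → ℂ) ≠ 0 := by
    intro h
    have := congrFun h 0
    simp at this
  obtain ⟨k0, hk0'⟩ := hpartB ![1, 0] h10
  have hk0 : m k0 ≠ 0 := fun h => hk0' (by rw [h]; simp)
  -- the square matrix B with first column v
  set B : Matrix (Fin (n + 1)) (Fin (n + 1)) (MvPolynomial (Fin 2) ℂ) := Bw v with hBdef
  have hdetB : B.det = 0 := by rw [hexp v, hv]
  -- first row of the adjugate of B
  have hadj0 : ∀ k, B.adjugate 0 k = m k := by
    intro k
    rw [Matrix.adjugate_apply, Matrix.det_succ_row _ k]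
    rw [Finset.sum_eq_single (0 : Fin (n + 1))]
    · rw [Matrix.updateRow_self]
      have h5 : (B.updateRow k (Pi.single 0 1)).submatrix k.succAbove
          ((0 : Fin (n + 1)).succAbove) = A.submatrix k.succAbove id := by
        rw [Fin.succAbove_zero, Matrix.submatrix_updateRow_succAbove]
        exact hBwsub v k
      rw [h5, hm k]
      simp
    · intro j _ hj
      rw [Matrix.updateRow_self, Pi.single_eq_of_ne hj]
      ring
    · intro h
      exact absurd (Finset.mem_univ _) h
  have hBadj : B * B.adjugate = 0 := by
    rw [Matrix.mul_adjugate, hdetB, zero_smul]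
  -- the auxiliary solutions U k with m k • v = A * U k
  set U : Fin (n + 1) → Fin n → (MvPolynomial (Fin 2) ℂ) := fun k j => - B.adjugate j.succ k with hUdef
  have hU : ∀ k i, m k * v i = ∑ j, A i j * U k j := by
    intro k i
    have h := congrFun (congrFun hBadj i) k
    rw [Matrix.mul_apply] at h
    rw [Fin.sum_univ_succ] at h
    have h0 : B i 0 = v i := rfl
    have hs : ∀ j : Fin n, B i j.succ = A i j := fun j => hBws v i j
    rw [h0, hadj0 k] at h
    simp only [hs] at h
    simp only [Matrix.zero_apply] at h
    have : ∑ j, A i j * U k j = - ∑ j, A i j * B.adjugate j.succ k := by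
      rw [← Finset.sum_neg_distrib]
      exact Finset.sum_congr rfl fun j _ => by rw [hUdef]; ring
    rw [this]
    linear_combination h
  -- injectivity of A over the polynomial ring
  have hinj : ∀ c : Fin n → (MvPolynomial (Fin 2) ℂ), (∀ i, ∑ j, A i j * c j = 0) → c = 0 := by
    intro c hc
    by_contra hc0
    have hdS : (A.submatrix k0.succAbove id).det ≠ 0 := by
      intro h
      exact hk0 (by rw [hm k0, h, mul_zero])
    have hSc : (A.submatrix k0.succAbove id).mulVec c = 0 := by
      funext k
      simpa [Matrix.mulVec, dotProduct, Matrix.submatrix_apply] using hc (k0.succAbove k)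
    exact hdS (Matrix.exists_mulVec_eq_zero_iff.mp ⟨c, hc0, hSc⟩)
  -- cross relations between the U k
  have hcross : ∀ k l (j : Fin n), m k * U l j = m l * U k j := by
    intro k l j
    have h6 : (fun j => m k * U l j - m l * U k j) = 0 := by
      apply hinj
      intro i
      have e1 : ∑ j, A i j * (m k * U l j - m l * U k j)
          = m k * (∑ j, A i j * U l j) - m l * (∑ j, A i j * U k j) := by
        rw [Finset.mul_sum, Finset.mul_sum, ← Finset.sum_sub_distrib]
        exact Finset.sum_congr rfl fun j _ => by ring
      rw [e1, ← hU l i, ← hU k i]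
      ring
    have := congrFun h6 j
    simpa [sub_eq_zero] using this
  -- Nullstellensatz: the variables are in the radical of the ideal of the m's
  set I : Ideal (MvPolynomial (Fin 2) ℂ) := Ideal.span (Set.range m) with hIdef
  have hXrad : ∀ s : Fin 2, (X s : (MvPolynomial (Fin 2) ℂ)) ∈ I.radical := by
    intro s
    rw [← vanishingIdeal_zeroLocus_eq_radical (K := ℂ) I]
    rw [mem_vanishingIdeal_iff]
    intro p hp
    rw [mem_zeroLocus_iff] at hp
    by_cases hp0 : p = 0
    · subst hp0; simp
    · obtain ⟨i, hi⟩ := hpartB p hp0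
      exact absurd (hp (m i) (Ideal.subset_span (Set.mem_range_self i))) hi
  obtain ⟨a, hxa⟩ := Ideal.mem_radical_iff.mp (hXrad 0)
  obtain ⟨b, hyb⟩ := Ideal.mem_radical_iff.mp (hXrad 1)
  rw [hIdef, Ideal.span, Submodule.mem_span_range_iff_exists_fun] at hxa hyb
  obtain ⟨c, hc⟩ := hxa
  obtain ⟨e, he⟩ := hyb
  -- m k0 divides every entry of U k0
  have hdvd : ∀ j, m k0 ∣ U k0 j := by
    intro j
    apply aux_key_dvd _ _ a b
    · refine ⟨∑ k, c k * U k j, ?_⟩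
      rw [← hc, Finset.sum_mul, Finset.mul_sum]
      refine Finset.sum_congr rfl fun k _ => ?_
      have := hcross k k0 j
      calc c k • m k * U k0 j = c k * (m k * U k0 j) := by rw [smul_eq_mul]; ring
        _ = c k * (m k0 * U k j) := by rw [this]
        _ = m k0 * (c k * U k j) := by ring
    · refine ⟨∑ k, e k * U k j, ?_⟩
      rw [← he, Finset.sum_mul, Finset.mul_sum]
      refine Finset.sum_congr rfl fun k _ => ?_
      have := hcross k k0 j
      calc e k • m k * U k0 j = e k * (m k * U k0 j) := by rw [smul_eq_mul]; ring
        _ = e k * (m k0 * U k j) := by rw [this]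
        _ = m k0 * (e k * U k j) := by ring
  choose u hu using hdvd
  refine ⟨u, fun i => ?_⟩
  have h7 : m k0 * v i = m k0 * ∑ j, A i j * u j := by
    rw [hU k0 i, Finset.mul_sum]
    refine Finset.sum_congr rfl fun j _ => ?_
    rw [hu j]
    ring
  exact mul_left_cancel₀ hk0 h7
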